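/- Let n ≥ 2 be an integer not divisible by 5, and let c = cos(π/n). Then the minimal polynomial of c + cos(π/5) over the subfield ℚ(c) of ℝ is X² − (2c + 1/2)·X + (c² + c/2 − 1/4). -/

import Mathlib

open Real Polynomial

noncomputable section

open IntermediateField
set_option maxHeartbeats 1000000
set_option synthInstance.maxHeartbeats 400000


lemma finrank_adjoin_primroot {m : ℕ} (hm : 0 < m) {ζ : ℂ} (hζ : IsPrimitiveRoot ζ m) :
    Module.finrank ℚ (IntermediateField.adjoin ℚ ({ζ} : Set ℂ)) = Nat.totient m := by
  have hint : IsIntegral ℚ ζ := (hζ.isIntegral hm).tower_top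
  rw [IntermediateField.adjoin.finrank hint, ← Polynomial.cyclotomic_eq_minpoly_rat hζ hm,
    Polynomial.natDegree_cyclotomic]

lemma sqrt5_not_mem (n : ℕ) (hn : 2 ≤ n) (h5 : ¬ (5 ∣ n)) :
    Real.sqrt 5 ∉ IntermediateField.adjoin ℚ ({Real.cos (π / n)} : Set ℝ) := by
  intro hmem
  have hn0 : (n:ℝ) ≠ 0 := by positivity
  have hn0' : (n:ℂ) ≠ 0 := by exact_mod_cast Nat.cast_ne_zero.mpr (by omega)
  -- primitive roots
  set N : ℕ := 10 * n with hN
  have hNpos : 0 < N := by omega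
  set ξ : ℂ := Complex.exp (2 * π * Complex.I / N) with hξdef
  have hξ : IsPrimitiveRoot ξ N := Complex.isPrimitiveRoot_exp N (by omega)
  have hζprim : IsPrimitiveRoot (ξ ^ 5) (2 * n) := hξ.pow hNpos (by ring)
  have hηprim : IsPrimitiveRoot (ξ ^ (2 * n)) 5 := hξ.pow hNpos (by ring)
  set ζ : ℂ := ξ ^ 5 with hζdef
  set η : ℂ := ξ ^ (2 * n) with hηdef
  have hζexp : ζ = Complex.exp ((π / n) * Complex.I) := by
    rw [hζdef, hξdef, ← Complex.exp_nat_mul]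
    congr 1
    rw [show ((N : ℂ)) = 10 * (n : ℂ) by rw [hN]; push_cast; ring]
    field_simp
    ring
  have hηexp : η = Complex.exp ((2 * π / 5) * Complex.I) := by
    rw [hηdef, hξdef, ← Complex.exp_nat_mul]
    congr 1
    rw [show ((N : ℂ)) = 10 * (n : ℂ) by rw [hN]; push_cast; ring]
    field_simp
    push_cast
    ring
  have hζne : ζ ≠ 0 := by rw [hζexp]; exact Complex.exp_ne_zero _
  have hηne : η ≠ 0 := by rw [hηexp]; exact Complex.exp_ne_zero _
  have hξne : ξ ≠ 0 := by rw [hξdef]; exact Complex.exp_ne_zero _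
  set F : IntermediateField ℚ ℂ := IntermediateField.adjoin ℚ {ζ} with hFdef
  have hζF : ζ ∈ F := IntermediateField.subset_adjoin ℚ _ rfl
  have h2F : (2 : ℂ) ∈ F := by
    have := IntermediateField.natCast_mem F 2
    simpa using this
  have hcos : ((Real.cos (π / n) : ℝ) : ℂ) = (ζ + ζ⁻¹) / 2 := by
    rw [Complex.ofReal_cos, hζexp, ← Complex.exp_neg]
    have h2c := Complex.two_cos (x := ((π / n : ℝ) : ℂ))
    rw [neg_mul] at h2c
    push_cast at h2c ⊢
    linear_combination h2c / 2
  have hcF : ((Real.cos (π / n) : ℝ) : ℂ) ∈ F := by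
    rw [hcos]
    exact div_mem (add_mem hζF (inv_mem hζF)) h2F
  -- transport √5 into F
  have hsF : ((Real.sqrt 5 : ℝ) : ℂ) ∈ F := by
    have hmap := IntermediateField.adjoin_map ℚ ({Real.cos (π / n)} : Set ℝ)
      (Complex.ofRealAm.restrictScalars ℚ)
    have hmem' : ((Real.sqrt 5 : ℝ) : ℂ) ∈
        (IntermediateField.adjoin ℚ ({Real.cos (π / n)} : Set ℝ)).map
          (Complex.ofRealAm.restrictScalars ℚ) := ⟨_, hmem, rfl⟩
    rw [hmap] at hmem'
    refine IntermediateField.adjoin_le_iff.mpr ?_ hmem'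
    rintro x ⟨y, hy, rfl⟩
    simp only [Set.mem_singleton_iff] at hy
    subst hy
    exact hcF
  set s : ℂ := ((Real.sqrt 5 : ℝ) : ℂ) with hsdef
  have haF : (s - 1) / 2 ∈ F := div_mem (sub_mem hsF (one_mem F)) h2F
  -- η is a root of a quadratic over F
  have h25 : Real.cos (2 * π / 5) = (Real.sqrt 5 - 1) / 4 := by
    rw [show 2 * π / 5 = 2 * (π / 5) by ring, Real.cos_two_mul, Real.cos_pi_div_five]
    have h : Real.sqrt 5 ^ 2 = 5 := Real.sq_sqrt (by norm_num)
    linear_combination h / 8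
  have hsum : η + η⁻¹ = (s - 1) / 2 := by
    rw [hηexp, ← Complex.exp_neg]
    have h2c := Complex.two_cos (x := ((2 * π / 5 : ℝ) : ℂ))
    rw [neg_mul, ← Complex.ofReal_cos, h25] at h2c
    push_cast at h2c ⊢
    rw [← hsdef] at h2c
    linear_combination -h2c
  have hroot : η ^ 2 - ((s - 1) / 2) * η + 1 = 0 := by
    have h1 : η * η⁻¹ = 1 := mul_inv_cancel₀ hηne
    linear_combination η * hsum - h1
  -- the quadratic over F
  set A : F := ⟨(s - 1) / 2, haF⟩ with hAdef
  set q : Polynomial F := X ^ 2 - C A * X + 1 with hqdef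
  have hqmonic : q.Monic := by
    rw [hqdef]
    monicity!
  have hqdeg : q.natDegree = 2 := by
    rw [hqdef]
    compute_degree!
  have hqeval : Polynomial.aeval η q = 0 := by
    rw [hqdef]
    simp only [map_add, map_sub, map_mul, map_pow, map_one, aeval_X, aeval_C]
    show η ^ 2 - ((s - 1) / 2) * η + 1 = 0
    exact hroot
  have hηint : IsIntegral F η := ⟨q, hqmonic, by rwa [← Polynomial.aeval_def]⟩
  have hζint : IsIntegral ℚ ζ := (hζprim.isIntegral (by omega)).tower_top
  haveI : FiniteDimensional ℚ F := IntermediateField.adjoin.finiteDimensional hζint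
  haveI : FiniteDimensional F F⟮η⟯ := IntermediateField.adjoin.finiteDimensional hηint
  -- identify the big field
  have hErs : (F⟮η⟯).restrictScalars ℚ = IntermediateField.adjoin ℚ ({ζ} ∪ {η}) :=
    IntermediateField.adjoin_adjoin_left ℚ {ζ} {η}
  have hcop : Nat.Coprime 5 (2 * n) := by
    have h52 : Nat.Coprime 5 2 := by norm_num
    refine (Nat.Prime.coprime_iff_not_dvd (by norm_num)).mpr (fun h => h5 ?_)
    exact (Nat.Coprime.dvd_of_dvd_mul_left h52 h)
  have hAdjEq : IntermediateField.adjoin ℚ ({ζ} ∪ {η} : Set ℂ)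
      = IntermediateField.adjoin ℚ ({ξ} : Set ℂ) := by
    apply le_antisymm
    · rw [IntermediateField.adjoin_le_iff]
      have hξmem : ξ ∈ IntermediateField.adjoin ℚ ({ξ} : Set ℂ) :=
        IntermediateField.subset_adjoin ℚ _ rfl
      rintro x (hx | hx) <;> rw [Set.mem_singleton_iff] at hx <;> subst hx
      · exact pow_mem hξmem 5
      · exact pow_mem hξmem (2 * n)
    · rw [IntermediateField.adjoin_le_iff]
      rintro x hx
      rw [Set.mem_singleton_iff] at hx
      subst hx
      obtain ⟨u, v, huv⟩ : IsCoprime (5 : ℤ) ((2 * n : ℕ) : ℤ) := by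
        rw [Int.isCoprime_iff_gcd_eq_one]
        exact_mod_cast hcop
      have hξeq : ξ = ζ ^ u * η ^ v := by
        rw [hζdef, hηdef, ← zpow_natCast ξ 5, ← zpow_natCast ξ (2 * n),
          ← zpow_mul, ← zpow_mul, ← zpow_add₀ hξne]
        have hexp : ((5 : ℕ) : ℤ) * u + ((2 * n : ℕ) : ℤ) * v = 1 := by push_cast at huv ⊢; linarith
        rw [hexp, zpow_one]
      rw [hξeq]
      have hζm : ζ ∈ IntermediateField.adjoin ℚ ({ζ} ∪ {η} : Set ℂ) :=
        IntermediateField.subset_adjoin ℚ _ (Or.inl rfl)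
      have hηm : η ∈ IntermediateField.adjoin ℚ ({ζ} ∪ {η} : Set ℂ) :=
        IntermediateField.subset_adjoin ℚ _ (Or.inr rfl)
      exact mul_mem (zpow_mem hζm u) (zpow_mem hηm v)
  -- finrank computations
  have h1 : Module.finrank ℚ (IntermediateField.adjoin ℚ ({ξ} : Set ℂ)) = Nat.totient N :=
    finrank_adjoin_primroot hNpos hξ
  have h2 : Module.finrank ℚ F = Nat.totient (2 * n) :=
    finrank_adjoin_primroot (by omega) hζprim
  have h3 : Module.finrank F F⟮η⟯ ≤ 2 := by
    rw [IntermediateField.adjoin.finrank hηint]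
    calc (minpoly F η).natDegree ≤ q.natDegree :=
          Polynomial.natDegree_le_of_dvd (minpoly.dvd F η hqeval) hqmonic.ne_zero
      _ = 2 := hqdeg
  have h4 : Module.finrank ℚ ((F⟮η⟯).restrictScalars ℚ) =
      Module.finrank ℚ F * Module.finrank F F⟮η⟯ :=
    (Module.finrank_mul_finrank ℚ F F⟮η⟯).symm
  have htot : Nat.totient N = 4 * Nat.totient (2 * n) := by
    rw [hN, show 10 * n = 5 * (2 * n) by ring, Nat.totient_mul hcop]
    norm_num [Nat.totient_prime (by norm_num : Nat.Prime 5)]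
  have htpos : 0 < Nat.totient (2 * n) := Nat.totient_pos.mpr (by omega)
  rw [hErs, hAdjEq, h1, h2, htot] at h4
  nlinarith [h3, htpos, h4]

/-- Let `n ≥ 2` with `5 ∤ n` and `c = cos(π/n)`.  The minimal polynomial of `c + cos(π/5)`
over the subfield `ℚ(c) ⊆ ℝ` is `X² − (2c + 1/2)·X + (c² + c/2 − 1/4)` (stated via its image
under the injective map `Polynomial ℚ(c) → Polynomial ℝ`). -/
theorem minpoly_cos_pi_n_plus_cos_pi_5
    (n : ℕ) (hn : 2 ≤ n) (h5 : ¬ (5 ∣ n))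
    (c : ℝ) (hc : c = Real.cos (π / n)) :
    (minpoly (IntermediateField.adjoin ℚ ({c} : Set ℝ)) (c + Real.cos (π / 5))).map
        (algebraMap (IntermediateField.adjoin ℚ ({c} : Set ℝ)) ℝ)
      = X ^ 2 - C (2 * c + 1 / 2) * X + C (c ^ 2 + c / 2 - 1 / 4) := by
  set K : IntermediateField ℚ ℝ := IntermediateField.adjoin ℚ ({c} : Set ℝ) with hKdef
  have hcK : c ∈ K := IntermediateField.subset_adjoin ℚ _ rfl
  have h2K : (2 : ℝ) ∈ K := by simpa using IntermediateField.natCast_mem K 2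
  have h4K : (4 : ℝ) ∈ K := by simpa using IntermediateField.natCast_mem K 4
  have h1K : (1 : ℝ) ∈ K := one_mem K
  have hb1 : 2 * c + 1 / 2 ∈ K := add_mem (mul_mem h2K hcK) (div_mem h1K h2K)
  have hb0 : c ^ 2 + c / 2 - 1 / 4 ∈ K :=
    sub_mem (add_mem (pow_mem hcK 2) (div_mem hcK h2K)) (div_mem h1K h4K)
  set α : ℝ := c + Real.cos (π / 5) with hαdef
  set b1 : K := ⟨2 * c + 1 / 2, hb1⟩ with hb1def
  set b0 : K := ⟨c ^ 2 + c / 2 - 1 / 4, hb0⟩ with hb0def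
  set q : Polynomial K := X ^ 2 - C b1 * X + C b0 with hqdef
  have hs2 : Real.sqrt 5 ^ 2 = 5 := Real.sq_sqrt (by norm_num)
  have hαval : α = c + (1 + Real.sqrt 5) / 4 := by
    rw [hαdef, Real.cos_pi_div_five]
  have hroot : α ^ 2 - (2 * c + 1 / 2) * α + (c ^ 2 + c / 2 - 1 / 4) = 0 := by
    rw [hαval]
    linear_combination hs2 / 16
  have hqmonic : q.Monic := by
    rw [hqdef]
    monicity!
  have hqdeg : q.natDegree = 2 := by
    rw [hqdef]
    compute_degree!
  have hqeval : Polynomial.aeval α q = 0 := by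
    rw [hqdef]
    simp only [map_add, map_sub, map_mul, map_pow, aeval_X, aeval_C]
    show α ^ 2 - (2 * c + 1 / 2) * α + (c ^ 2 + c / 2 - 1 / 4) = 0
    exact hroot
  have hαint : IsIntegral K α := ⟨q, hqmonic, by rwa [← Polynomial.aeval_def]⟩
  have hdvd : minpoly K α ∣ q := minpoly.dvd K α hqeval
  have hdeg_le : (minpoly K α).natDegree ≤ 2 := by
    calc (minpoly K α).natDegree ≤ q.natDegree :=
          Polynomial.natDegree_le_of_dvd hdvd hqmonic.ne_zero
      _ = 2 := hqdeg
  have hαnotK : α ∉ K := by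
    intro hαK
    have hcosK : Real.cos (π / 5) ∈ K := by
      have : α - c ∈ K := sub_mem hαK hcK
      simpa [hαdef] using this
    have hsqrtK : Real.sqrt 5 ∈ K := by
      have h4c : (4 : ℝ) * Real.cos (π / 5) - 1 ∈ K := sub_mem (mul_mem h4K hcosK) h1K
      have : (4 : ℝ) * Real.cos (π / 5) - 1 = Real.sqrt 5 := by
        rw [Real.cos_pi_div_five]; ring
      rwa [this] at h4c
    exact sqrt5_not_mem n hn h5 (by rwa [← hc])
  have hdeg_ne1 : (minpoly K α).natDegree ≠ 1 := by
    intro h1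
    have hdeg1 : (minpoly K α).degree = 1 := by
      rw [Polynomial.degree_eq_natDegree (minpoly.ne_zero hαint), h1]
      rfl
    obtain ⟨y, hy⟩ := (minpoly.degree_eq_one_iff).mp hdeg1
    apply hαnotK
    rw [← hy]
    exact y.2
  have hdeg2 : (minpoly K α).natDegree = 2 := by
    have hpos : 0 < (minpoly K α).natDegree := minpoly.natDegree_pos hαint
    omega
  have heq : q = minpoly K α :=
    Polynomial.eq_of_monic_of_dvd_of_natDegree_le (minpoly.monic hαint) hqmonic hdvd
      (by rw [hqdeg, hdeg2])
  rw [← heq, hqdef]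
  simp only [Polynomial.map_add, Polynomial.map_sub, Polynomial.map_mul, Polynomial.map_pow,
    Polynomial.map_X, Polynomial.map_C]
  rfl

end
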